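/- Let 0 < ν < 1 and C ≥ 0, and let h : ℝⁿ → ℝ be such that the function x ↦ h(x) + C‖x‖^{ν+1} is convex on ℝⁿ. Then for all x, y ∈ ℝⁿ and λ ∈ [0,1], h(λx+(1−λ)y) ≤ λh(x) + (1−λ)h(y) + C·(λ(1−λ))^{(ν+1)/2}·‖x−y‖^{ν+1}; in particular h is ν-paraconvex on ℝⁿ. -/
import Mathlib
open RealInnerProductSpace

lemma my_rpow_subadd (a b p : ℝ) (ha : 0 ≤ a) (hb : 0 ≤ b) (hp : 0 ≤ p) (hp1 : p ≤ 1) :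
    (a + b) ^ p ≤ a ^ p + b ^ p := by
  lift a to NNReal using ha
  lift b to NNReal using hb
  rw [← NNReal.coe_add, ← NNReal.coe_rpow, ← NNReal.coe_rpow, ← NNReal.coe_rpow, ← NNReal.coe_add,
    NNReal.coe_le_coe]
  exact NNReal.rpow_add_le_add_rpow a b hp hp1

lemma my_sq_rpow (a p : ℝ) (ha : 0 ≤ a) : (a ^ 2) ^ (p / 2) = a ^ p := by
  rw [← Real.rpow_natCast a 2, ← Real.rpow_mul ha]
  congr 1; ring

lemma my_parallelogram {E : Type*} [NormedAddCommGroup E] [InnerProductSpace ℝ E]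
    (c u : E) (t : ℝ) :
    t * ‖c + (1 - t) • u‖ ^ 2 + (1 - t) * ‖c - t • u‖ ^ 2 = ‖c‖ ^ 2 + (t * (1 - t)) * ‖u‖ ^ 2 := by
  rw [norm_add_sq_real, norm_sub_sq_real, real_inner_smul_right, real_inner_smul_right,
    norm_smul, norm_smul]
  simp only [Real.norm_eq_abs, mul_pow, sq_abs]
  ring

lemma my_key_ineq {E : Type*} [NormedAddCommGroup E] [InnerProductSpace ℝ E]
    (p : ℝ) (hp0 : 0 < p) (hp2 : p ≤ 2) (x y : E) {t : ℝ} (ht0 : 0 ≤ t) (ht1 : t ≤ 1) :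
    t * ‖x‖ ^ p + (1 - t) * ‖y‖ ^ p ≤
      ‖t • x + (1 - t) • y‖ ^ p + (t * (1 - t)) ^ (p / 2) * ‖x - y‖ ^ p := by
  set c : E := t • x + (1 - t) • y with hc
  set u : E := x - y with hu
  have hx : x = c + (1 - t) • u := by rw [hc, hu]; module
  have hy : y = c - t • u := by rw [hc, hu]; module
  have hq0 : (0:ℝ) ≤ p / 2 := by linarith
  have hq1 : p / 2 ≤ 1 := by linarith
  have conc := Real.concaveOn_rpow hq0 hq1
  have hA : (‖x‖ ^ 2 : ℝ) ∈ Set.Ici (0:ℝ) := Set.mem_Ici.mpr (by positivity)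
  have hB : (‖y‖ ^ 2 : ℝ) ∈ Set.Ici (0:ℝ) := Set.mem_Ici.mpr (by positivity)
  have h1 := conc.2 hA hB ht0 (show (0:ℝ) ≤ 1 - t by linarith) (by ring)
  simp only [smul_eq_mul] at h1
  have h2 : t * ‖x‖ ^ 2 + (1 - t) * ‖y‖ ^ 2 = ‖c‖ ^ 2 + (t * (1 - t)) * ‖u‖ ^ 2 := by
    nth_rewrite 1 [hx]; nth_rewrite 1 [hy]
    exact my_parallelogram c u t
  rw [h2] at h1
  have h3 : (‖c‖ ^ 2 + (t * (1 - t)) * ‖u‖ ^ 2) ^ (p / 2) ≤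
      (‖c‖ ^ 2) ^ (p / 2) + ((t * (1 - t)) * ‖u‖ ^ 2) ^ (p / 2) := by
    apply my_rpow_subadd _ _ _ (by positivity) (mul_nonneg (mul_nonneg ht0 (by linarith)) (by positivity)) hq0 hq1
  have h4 : ((t * (1 - t)) * ‖u‖ ^ 2) ^ (p / 2) = (t * (1 - t)) ^ (p / 2) * ‖u‖ ^ p := by
    rw [Real.mul_rpow (mul_nonneg ht0 (by linarith)) (by positivity), my_sq_rpow _ _ (norm_nonneg _)]
  rw [my_sq_rpow _ _ (norm_nonneg _), my_sq_rpow _ _ (norm_nonneg _)] at h1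
  rw [my_sq_rpow _ _ (norm_nonneg _), h4] at h3
  linarith

lemma my_part_one {E : Type*} [NormedAddCommGroup E] [InnerProductSpace ℝ E]
    (p C : ℝ) (hp1 : 1 ≤ p) (hp2 : p ≤ 2) (hC : 0 ≤ C) (h : E → ℝ)
    (hconv : ConvexOn ℝ Set.univ (fun x => h x + C * ‖x‖ ^ p)) :
    ∀ x y : E, ∀ t : ℝ, 0 ≤ t → t ≤ 1 →
      h (t • x + (1 - t) • y) ≤
        t * h x + (1 - t) * h y + C * (t * (1 - t)) ^ (p / 2) * ‖x - y‖ ^ p := by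
  intro x y t ht0 ht1
  have hcv := hconv.2 (Set.mem_univ x) (Set.mem_univ y) ht0 (show (0:ℝ) ≤ 1 - t by linarith) (by ring)
  simp only [smul_eq_mul] at hcv
  have hk := my_key_ineq p (by linarith) hp2 x y ht0 ht1
  have hk' := mul_le_mul_of_nonneg_left hk hC
  nlinarith [hk']

lemma my_part_two {E : Type*} [NormedAddCommGroup E] [InnerProductSpace ℝ E]
    (p C : ℝ) (hp1 : 1 < p) (hp2 : p ≤ 2) (hC : 0 ≤ C) (h : E → ℝ)
    (hconv : ConvexOn ℝ Set.univ (fun x => h x + C * ‖x‖ ^ p)) :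
    ∃ ρ : ℝ, 0 ≤ ρ ∧ ∀ x y : E, ∀ t : ℝ, 0 ≤ t → t ≤ 1 →
      h (t • x + (1 - t) • y) ≤
        t * h x + (1 - t) * h y + ρ * min t (1 - t) * ‖x - y‖ ^ p := by
  have hp0 : (0:ℝ) < p := by linarith
  set r : ℝ := (1/2 : ℝ) ^ (p - 1) with hrdef
  have hr0 : 0 < r := Real.rpow_pos_of_pos (by norm_num) _
  have hr1 : r < 1 := Real.rpow_lt_one (by norm_num) (by norm_num) (by linarith)
  have h1r : (0:ℝ) < 1 - r := by linarith
  have fact1 : ∀ (m : ℕ) (t : ℝ), 0 ≤ t → t ≤ (1/2:ℝ) ^ m → t ^ (p - 1) ≤ r ^ m := by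
    intro m t ht0 htm
    have h1 : t ^ (p - 1) ≤ ((1/2:ℝ) ^ m) ^ (p - 1) :=
      Real.rpow_le_rpow ht0 htm (by linarith)
    have h2 : ((1/2:ℝ) ^ m) ^ (p - 1) = r ^ m := by
      rw [← Real.rpow_natCast (1/2 : ℝ) m, ← Real.rpow_mul (by norm_num), mul_comm,
        Real.rpow_mul (by norm_num), Real.rpow_natCast]
    rw [h2] at h1; exact h1
  set ρf : ℕ → ℝ := fun k => 4 * C + C * (r ^ 2 - r ^ (k + 2)) / (1 - r) with hρf
  have P : ∀ k : ℕ, ∀ x y : E, ∀ t : ℝ, (1/2:ℝ) ^ (k + 2) ≤ t → t ≤ 1/2 →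
      h (t • x + (1 - t) • y) ≤
        t * h x + (1 - t) * h y + ρf k * (t * ‖x - y‖ ^ p) := by
    intro k
    induction k with
    | zero =>
      intro x y t hlo hhi
      have hlo' : (1/4 : ℝ) ≤ t := by norm_num at hlo; linarith
      have ht0 : (0:ℝ) ≤ t := by linarith
      have h1 := my_part_one p C hp1.le hp2 hC h hconv x y t ht0 (by linarith)
      have hs : (t * (1 - t)) ^ (p / 2) ≤ 1 :=
        Real.rpow_le_one (by nlinarith) (by nlinarith) (by linarith)
      have hdp : (0:ℝ) ≤ ‖x - y‖ ^ p := Real.rpow_nonneg (norm_nonneg _) _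
      have hρ0 : ρf 0 = 4 * C := by simp [hρf]
      rw [hρ0]
      have hsn : (0:ℝ) ≤ (t * (1 - t)) ^ (p / 2) := Real.rpow_nonneg (by nlinarith) _
      nlinarith [mul_le_mul_of_nonneg_left (mul_le_mul_of_nonneg_right hs hdp) hC,
        mul_nonneg hC hdp,
        mul_le_mul_of_nonneg_left (show (1:ℝ) ≤ 4*t by linarith) (mul_nonneg hC hdp)]
    | succ k IH =>
      intro x y t hlo hhi
      have htpos : (0:ℝ) < t := lt_of_lt_of_le (by positivity) hlo
      have hdp : (0:ℝ) ≤ ‖x - y‖ ^ p := Real.rpow_nonneg (norm_nonneg _) _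
      have hrr : r ^ (k + 1 + 2) ≤ r ^ (k + 2) :=
        pow_le_pow_of_le_one hr0.le hr1.le (by omega)
      have hmono : ρf k ≤ ρf (k + 1) := by
        have h3 : C * (r ^ 2 - r ^ (k + 2)) ≤ C * (r ^ 2 - r ^ (k + 1 + 2)) :=
          mul_le_mul_of_nonneg_left (by linarith) hC
        have h4 := mul_le_mul_of_nonneg_right h3 (le_of_lt (inv_pos.mpr h1r))
        simp only [hρf, div_eq_mul_inv]
        linarith
      by_cases hcase : (1/2:ℝ) ^ (k + 2) ≤ t
      · have h5 := IH x y t hcase hhi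
        have h6 : ρf k * (t * ‖x - y‖ ^ p) ≤ ρf (k + 1) * (t * ‖x - y‖ ^ p) :=
          mul_le_mul_of_nonneg_right hmono (mul_nonneg htpos.le hdp)
        linarith
      · push_neg at hcase
        have hpow : ((1/2:ℝ)) ^ (k + 3) = (1/2:ℝ) ^ (k + 2) * (1/2) := pow_succ _ _
        have h2lo : (1/2:ℝ) ^ (k + 2) ≤ 2 * t := by
          have : (1/2:ℝ) ^ (k + 1 + 2) ≤ t := hlo
          rw [show k + 1 + 2 = k + 3 from rfl, hpow] at this
          linarith
        have h2hi : 2 * t ≤ 1/2 := by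
          have hk1 : ((1/2:ℝ)) ^ (k + 1) ≤ (1/2:ℝ) ^ 1 :=
            pow_le_pow_of_le_one (by norm_num) (by norm_num) (by omega)
          have hk2 : ((1/2:ℝ)) ^ (k + 2) = (1/2:ℝ) ^ (k + 1) * (1/2) := pow_succ _ _
          norm_num at hk1
          nlinarith
        have hw := IH x y (2 * t) h2lo h2hi
        have hz := my_part_one p C hp1.le hp2 hC h hconv
          ((2 * t) • x + (1 - 2 * t) • y) y (1/2) (by norm_num) (by norm_num)
        have hzeq : (1/2 : ℝ) • ((2 * t) • x + (1 - 2 * t) • y) + (1 - 1/2 : ℝ) • y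
            = t • x + (1 - t) • y := by module
        rw [hzeq] at hz
        have hwy : ((2 * t) • x + (1 - 2 * t) • y) - y = (2 * t) • (x - y) := by module
        rw [hwy] at hz
        have hnorm : ‖(2 * t) • (x - y)‖ = (2 * t) * ‖x - y‖ := by
          rw [norm_smul, Real.norm_eq_abs, abs_of_nonneg (by linarith)]
        rw [hnorm] at hz
        -- simplify the coefficient in hz
        have hcoef : ((1/2 : ℝ) * (1 - 1/2)) ^ (p / 2) * ((2 * t) * ‖x - y‖) ^ p
            = t ^ (p - 1) * (t * ‖x - y‖ ^ p) := by
          have e1 : ((1/2 : ℝ) * (1 - 1/2)) = (1/2 : ℝ) ^ (2:ℕ) := by norm_num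
          rw [e1, my_sq_rpow (1/2) p (by norm_num)]
          rw [Real.mul_rpow (by linarith) (norm_nonneg _)]
          rw [← mul_assoc, ← Real.mul_rpow (by norm_num) (by linarith)]
          have e2 : (1/2 : ℝ) * (2 * t) = t := by ring
          rw [e2]
          have e3 : t ^ p = t ^ (p - 1) * t := by
            nth_rewrite 1 [show p = (p - 1) + 1 by ring]
            rw [Real.rpow_add htpos, Real.rpow_one]
          rw [e3]; ring
        rw [mul_assoc, hcoef] at hz
        have htp : t ^ (p - 1) ≤ r ^ (k + 2) := fact1 (k + 2) t htpos.le hcase.le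
        have hstep : ρf (k + 1) = ρf k + C * r ^ (k + 2) := by
          simp only [hρf]
          field_simp
          ring
        have htdp : (0:ℝ) ≤ t * ‖x - y‖ ^ p := mul_nonneg htpos.le hdp
        have h7 : C * (t ^ (p - 1) * (t * ‖x - y‖ ^ p)) ≤
            C * (r ^ (k + 2) * (t * ‖x - y‖ ^ p)) :=
          mul_le_mul_of_nonneg_left (mul_le_mul_of_nonneg_right htp htdp) hC
        rw [hstep]
        have hrw : ρf k * (2 * t * ‖x - y‖ ^ p) = 2 * (ρf k * (t * ‖x - y‖ ^ p)) := by ring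
        have hexp : (ρf k + C * r ^ (k + 2)) * (t * ‖x - y‖ ^ p)
            = ρf k * (t * ‖x - y‖ ^ p) + C * (r ^ (k + 2) * (t * ‖x - y‖ ^ p)) := by ring
        linarith [hz, hw, h7]
  refine ⟨4 * C + C * r ^ 2 / (1 - r), ?_, ?_⟩
  · have : (0:ℝ) ≤ C * r ^ 2 / (1 - r) := div_nonneg (mul_nonneg hC (sq_nonneg r)) h1r.le
    linarith
  set ρ : ℝ := 4 * C + C * r ^ 2 / (1 - r) with hρdef
  have hρ0 : (0:ℝ) ≤ ρ := by
    have : (0:ℝ) ≤ C * r ^ 2 / (1 - r) := div_nonneg (mul_nonneg hC (sq_nonneg r)) h1r.le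
    simp only [hρdef]; linarith
  have hle : ∀ k : ℕ, ρf k ≤ ρ := by
    intro k
    have h3 : C * (r ^ 2 - r ^ (k + 2)) ≤ C * r ^ 2 :=
      mul_le_mul_of_nonneg_left (by nlinarith [pow_nonneg hr0.le (k+2)]) hC
    have h4 := mul_le_mul_of_nonneg_right h3 (le_of_lt (inv_pos.mpr h1r))
    simp only [hρf, hρdef, div_eq_mul_inv]
    linarith
  have half : ∀ x y : E, ∀ t : ℝ, 0 ≤ t → t ≤ 1/2 →
      h (t • x + (1 - t) • y) ≤ t * h x + (1 - t) * h y + ρ * (t * ‖x - y‖ ^ p) := by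
    intro x y t ht0 thalf
    have hdp : (0:ℝ) ≤ ‖x - y‖ ^ p := Real.rpow_nonneg (norm_nonneg _) _
    rcases eq_or_lt_of_le ht0 with heq | hpos
    · rw [← heq]
      simp
    · obtain ⟨k, hk⟩ := exists_pow_lt_of_lt_one hpos (show (1/2:ℝ) < 1 by norm_num)
      have hklo : (1/2:ℝ) ^ (k + 2) ≤ t :=
        le_trans (le_trans (pow_le_pow_of_le_one (by norm_num) (by norm_num) (by omega)) hk.le)
          le_rfl
      have h5 := P k x y t hklo thalf
      have h6 : ρf k * (t * ‖x - y‖ ^ p) ≤ ρ * (t * ‖x - y‖ ^ p) :=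
        mul_le_mul_of_nonneg_right (hle k) (mul_nonneg ht0 hdp)
      linarith
  intro x y t ht0 ht1
  have hdp : (0:ℝ) ≤ ‖x - y‖ ^ p := Real.rpow_nonneg (norm_nonneg _) _
  rcases le_or_gt t (1/2) with hhalf | hgt
  · have h5 := half x y t ht0 hhalf
    rw [min_eq_left (by linarith)]
    have : ρ * t * ‖x - y‖ ^ p = ρ * (t * ‖x - y‖ ^ p) := by ring
    linarith
  · have h5 := half y x (1 - t) (by linarith) (by linarith)
    have hveq : (1 - t) • y + (1 - (1 - t)) • x = t • x + (1 - t) • y := by module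
    rw [hveq, norm_sub_rev y x, show (1 - (1 - t)) = t by ring] at h5
    rw [min_eq_right (by linarith)]
    have : ρ * (1 - t) * ‖x - y‖ ^ p = ρ * ((1 - t) * ‖x - y‖ ^ p) := by ring
    linarith

/-- If `x ↦ h x + C‖x‖^(ν+1)` is convex (`0 < ν < 1`, `C ≥ 0`), then
`h(tx+(1-t)y) ≤ t h x + (1-t) h y + C (t(1-t))^((ν+1)/2) ‖x-y‖^(ν+1)`; in particular `h`
is `ν`-paraconvex on `ℝⁿ`. -/
theorem paraconvex_of_add_norm_rpow_convex {n : ℕ} (ν C : ℝ)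
    (hν : 0 < ν) (hν1 : ν < 1) (hC : 0 ≤ C)
    (h : EuclideanSpace ℝ (Fin n) → ℝ)
    (hconv : ConvexOn ℝ Set.univ (fun x => h x + C * ‖x‖ ^ (ν + 1))) :
    (∀ x y : EuclideanSpace ℝ (Fin n), ∀ t ∈ Set.Icc (0 : ℝ) 1,
        h (t • x + (1 - t) • y) ≤
          t * h x + (1 - t) * h y + C * (t * (1 - t)) ^ ((ν + 1) / 2) * ‖x - y‖ ^ (ν + 1))
      ∧
    (∃ ρ : ℝ, 0 ≤ ρ ∧ ∀ x y : EuclideanSpace ℝ (Fin n), ∀ t ∈ Set.Icc (0 : ℝ) 1,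
        h (t • x + (1 - t) • y) ≤
          t * h x + (1 - t) * h y + ρ * min t (1 - t) * ‖x - y‖ ^ (1 + ν)) := by
  constructor
  · intro x y t ht
    exact my_part_one (ν + 1) C (by linarith) (by linarith) hC h hconv x y t ht.1 ht.2
  · obtain ⟨ρ, hρ0, hρ⟩ := my_part_two (ν + 1) C (by linarith) (by linarith) hC h hconv
    refine ⟨ρ, hρ0, ?_⟩
    intro x y t ht
    rw [show (1 : ℝ) + ν = ν + 1 from add_comm 1 ν]
    exact hρ x y t ht.1 ht.2
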